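/- In any full second-order propositional Kripke model, the second-order encoding of the propositional existential quantifier is semantically correct: K₂, σ, p ⊩ ∀X (∀χ (A → X) → X) if and only if there exists π ∈ Π_{0,p} such that K₂, σ[χ:=π], p ⊩ A (with X not free in A). -/
import Mathlib


namespace SOPC

/-- Second-order propositional formulas: propositional variables, implication,
and quantification over propositional (arity-0 second-order) variables. -/
inductive PF : Type
  | var : ℕ → PF
  | imp : PF → PF → PF
  | all : ℕ → PF → PF

/-- Free propositional variables. -/
def fvP : PF → Finset ℕ
  | .var X => {X}
  | .imp A B => fvP A ∪ fvP B
  | .all X A => (fvP A).erase X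

/-- A second-order propositional Kripke model over the poset of worlds `W`:
`Pi p` is the set of monotone `{0,1}`-valued interpretations available at
world `p` (represented as monotone-above-`p` functions `W → Prop`). -/
structure PModel (W : Type) [PartialOrder W] where
  Pi : W → Set (W → Prop)
  piNe : ∀ p, (Pi p).Nonempty
  piMono : ∀ p π, π ∈ Pi p → ∀ {q q' : W}, p ≤ q → q ≤ q' → π q → π q'
  piRes : ∀ {p q : W}, p ≤ q → Pi p ⊆ Pi q

/-- Kripke forcing for second-order propositional formulas. -/
def PForces {W : Type} [PartialOrder W] (M : PModel W) :
    (ℕ → W → Prop) → W → PF → Prop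
  | σ, p, .var X => σ X p
  | σ, p, .imp A B => ∀ q, p ≤ q → PForces M σ q A → PForces M σ q B
  | σ, p, .all X A => ∀ q, p ≤ q → ∀ π ∈ M.Pi q, PForces M (Function.update σ X π) q A

/-- The model is full: `Pi p` consists of *all* functions monotone above `p`. -/
def PModel.Full {W : Type} [PartialOrder W] (M : PModel W) : Prop :=
  ∀ p, M.Pi p = {π | ∀ q q' : W, p ≤ q → q ≤ q' → π q → π q'}

end SOPC
namespace SOPC

/-- Coincidence: forcing only depends on the values of `σ` on free variables. -/
theorem pforces_congr {W : Type} [PartialOrder W] (M : PModel W) :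
    ∀ (A : PF) (σ σ' : ℕ → W → Prop), (∀ Y ∈ fvP A, σ Y = σ' Y) →
    ∀ p, PForces M σ p A ↔ PForces M σ' p A
  | .var X, σ, σ', h, p => by
    simp [PForces, h X (by simp [fvP])]
  | .imp A B, σ, σ', h, p => by
    have hA := fun q => pforces_congr M A σ σ' (fun Y hY => h Y (by simp [fvP, hY])) q
    have hB := fun q => pforces_congr M B σ σ' (fun Y hY => h Y (by simp [fvP, hY])) q
    simp only [PForces]
    constructor <;> intro H q hq ha
    · exact (hB q).mp (H q hq ((hA q).mpr ha))
    · exact (hB q).mpr (H q hq ((hA q).mp ha))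
  | .all Z A, σ, σ', h, p => by
    simp only [PForces]
    constructor <;> intro H q hq π hπ
    · refine (pforces_congr M A _ _ (fun Y hY => ?_) q).mp (H q hq π hπ)
      rcases eq_or_ne Y Z with rfl | hYZ
      · simp [Function.update_self]
      · simp only [Function.update_of_ne hYZ]
        exact h Y (Finset.mem_erase.mpr ⟨hYZ, hY⟩)
    · refine (pforces_congr M A _ _ (fun Y hY => ?_) q).mpr (H q hq π hπ)
      rcases eq_or_ne Y Z with rfl | hYZ
      · simp [Function.update_self]
      · simp only [Function.update_of_ne hYZ]
        exact h Y (Finset.mem_erase.mpr ⟨hYZ, hY⟩)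

/-- Monotonicity of forcing, assuming each variable's value is monotone above `p`. -/
theorem pforces_mono {W : Type} [PartialOrder W] (M : PModel W)
    (A : PF) (σ : ℕ → W → Prop) {p q : W}
    (h : ∀ Y, ∀ r r' : W, p ≤ r → r ≤ r' → σ Y r → σ Y r')
    (hpq : p ≤ q) (H : PForces M σ p A) : PForces M σ q A := by
  cases A with
  | var X => exact h X p q le_rfl hpq H
  | imp A B => exact fun r hr => H r (hpq.trans hr)
  | all Z A => exact fun r hr => H r (hpq.trans hr)

/-- In a full second-order propositional Kripke model, the
second-order encoding `∀X (∀χ (A → X) → X)` of the propositional existential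
quantifier is semantically correct. -/
theorem ex_encoding_correct {W : Type} [PartialOrder W] (M : PModel W)
    (hfull : M.Full) (σ : ℕ → W → Prop) (p : W) (hσ : ∀ Y, σ Y ∈ M.Pi p)
    (A : PF) (X χ : ℕ) (hXA : X ∉ fvP A) (hXχ : X ≠ χ) :
    PForces M σ p (.all X (.imp (.all χ (.imp A (.var X))) (.var X))) ↔
      ∃ π ∈ M.Pi p, PForces M (Function.update σ χ π) p A := by
  have hmonoσ : ∀ Y, ∀ r r' : W, p ≤ r → r ≤ r' → σ Y r → σ Y r' :=
    fun Y r r' hr hrr' => M.piMono p (σ Y) (hσ Y) hr hrr'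
  constructor
  · intro H
    -- candidate monotone predicate
    set π : W → Prop :=
      fun q => ∃ φ ∈ M.Pi q, PForces M (Function.update σ χ φ) q A with hπdef
    have hπmem : π ∈ M.Pi p := by
      rw [hfull p]
      rintro q q' hpq hqq' ⟨φ, hφ, hforce⟩
      refine ⟨φ, M.piRes hqq' hφ, ?_⟩
      refine pforces_mono M A _ (fun Y r r' hr hrr' => ?_) hqq' hforce
      rcases eq_or_ne Y χ with rfl | hY
      · simpa [Function.update_self] using M.piMono q φ hφ hr hrr'
      · simp only [Function.update_of_ne hY]
        exact M.piMono q (σ Y) (M.piRes hpq (hσ Y)) hr hrr'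
    have key := H p le_rfl π hπmem p le_rfl
    have hprem : PForces M (Function.update σ X π)
        p (.all χ (.imp A (.var X))) := by
      intro q hq φ hφ r hr hA
      -- show π r
      have hXr : Function.update (Function.update σ X π) χ φ X r := by
        simp only [Function.update_of_ne hXχ, Function.update_self]
        refine ⟨φ, M.piRes hr hφ, ?_⟩
        refine (pforces_congr M A _ _ (fun Y hY => ?_) r).mp hA
        rcases eq_or_ne Y χ with rfl | hY'
        · simp [Function.update_self]
        · have hYX : Y ≠ X := fun h => hXA (h ▸ hY)
          simp [Function.update_of_ne hY', Function.update_of_ne hYX]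
      exact hXr
    have := key hprem
    simpa only [PForces, Function.update_self] using this
  · rintro ⟨π, hπ, hforce⟩
    intro q hq ρ hρ r hr Hall
    have hπr : π ∈ M.Pi r := M.piRes (hq.trans hr) hπ
    have h1 := Hall r le_rfl π hπr r le_rfl
    have hAr : PForces M (Function.update (Function.update σ X ρ) χ π) r A := by
      refine (pforces_congr M A _ (Function.update σ χ π) (fun Y hY => ?_) r).mpr ?_
      · rcases eq_or_ne Y χ with rfl | hY'
        · simp [Function.update_self]
        · have hYX : Y ≠ X := fun h => hXA (h ▸ hY)
          simp [Function.update_of_ne hY', Function.update_of_ne hYX]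
      · refine pforces_mono M A _ (fun Y s s' hs hss' => ?_) (hq.trans hr) hforce
        rcases eq_or_ne Y χ with rfl | hY
        · simpa [Function.update_self] using M.piMono p π hπ hs hss'
        · simp only [Function.update_of_ne hY]
          exact hmonoσ Y s s' hs hss'
    have := h1 hAr
    simpa only [PForces, Function.update_of_ne hXχ, Function.update_self] using this

end SOPC
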